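/- For every positive integer m, any multiset F of non-empty subsets of [m] that is uniquely resolvable into 2 classes has size at most m+1. Consequently g(2,m) = m+1, where g(n,m) is the maximum size of a multiset of non-empty subsets of [m] uniquely resolvable into n classes. -/

import Mathlib

open Finset

/-- `f` assigns each component (indexed by `ι`) to one of `n` classes so that the
components in each class are pairwise disjoint with union `[m]`: every `x ∈ [m]`
lies in exactly one component of each class. -/
def IsResolution {ι : Type*} {m n : ℕ} (C : ι → Finset (Fin m)) (f : ι → Fin n) : Prop :=
  ∀ (i : Fin n) (x : Fin m), ∃! j : ι, f j = i ∧ x ∈ C j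

/-- The multiset of nonempty subsets of `[m]` given by `C` is uniquely resolvable
into `n` classes: a resolution exists and is unique up to renaming the classes. -/
def UniquelyResolvable {ι : Type*} {m : ℕ} (n : ℕ) (C : ι → Finset (Fin m)) : Prop :=
  (∀ j, (C j).Nonempty) ∧ ∃ f : ι → Fin n, IsResolution C f ∧
    ∀ f' : ι → Fin n, IsResolution C f' → ∃ σ : Equiv.Perm (Fin n), f' = σ ∘ f

/-- `g n m` : maximum size of a multiset of nonempty subsets of `[m]` that is
uniquely resolvable into `n` classes. -/
noncomputable def g (n m : ℕ) : ℕ :=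
  sSup {k | ∃ C : Fin k → Finset (Fin m), UniquelyResolvable n C}

/-- `P k m` : the largest `N` such that there is a multiset of nonempty subsets of `[m]`
uniquely resolvable into `N` classes in which every class has size exactly `k`. -/
noncomputable def P (k m : ℕ) : ℕ :=
  sSup {N | ∃ C : Fin N × Fin k → Finset (Fin m),
    UniquelyResolvable N C ∧ IsResolution C Prod.fst}

/-- The binary entropy function. -/
noncomputable def H2 (x : ℝ) : ℝ := -x * Real.logb 2 x - (1 - x) * Real.logb 2 (1 - x)

lemma ub (m k : ℕ) (C : Fin k → Finset (Fin m)) (h : UniquelyResolvable 2 C) :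
    k ≤ m + 1 := by
  classical
  obtain ⟨hne, f, hf, huniq⟩ := h
  rcases Nat.eq_zero_or_pos k with rfl | hk
  · omega
  -- the two "partners" of each element
  set j0 : Fin m → Fin k := fun x => (hf 0 x).choose with hj0def
  set j1 : Fin m → Fin k := fun x => (hf 1 x).choose with hj1def
  have hj0 : ∀ x, f (j0 x) = 0 ∧ x ∈ C (j0 x) := fun x => (hf 0 x).choose_spec.1
  have hj1 : ∀ x, f (j1 x) = 1 ∧ x ∈ C (j1 x) := fun x => (hf 1 x).choose_spec.1
  have fin2 : ∀ i : Fin 2, i = 0 ∨ i = 1 := by decide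
  have memcases : ∀ (j : Fin k) (x : Fin m), x ∈ C j → j = j0 x ∨ j = j1 x := by
    intro j x hx
    rcases fin2 (f j) with h0 | h1
    · exact Or.inl ((hf 0 x).choose_spec.2 j ⟨h0, hx⟩)
    · exact Or.inr ((hf 1 x).choose_spec.2 j ⟨h1, hx⟩)
  have hj01ne : ∀ x, j0 x ≠ j1 x := by
    intro x hx
    have := (hj0 x).1
    rw [hx, (hj1 x).1] at this
    exact absurd this (by decide)
  -- the intersection graph
  set G : SimpleGraph (Fin k) :=
    { Adj := fun a b => a ≠ b ∧ ∃ x, x ∈ C a ∧ x ∈ C b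
      symm := ⟨by rintro a b ⟨hab, x, h1, h2⟩; exact ⟨hab.symm, x, h2, h1⟩⟩
      loopless := ⟨by rintro a ⟨hab, -⟩; exact hab rfl⟩ } with hGdef
  have hadj01 : ∀ x, G.Adj (j0 x) (j1 x) := fun x =>
    ⟨hj01ne x, x, (hj0 x).2, (hj1 x).2⟩
  -- connectivity
  have hconn : G.Connected := by
    rw [SimpleGraph.connected_iff]
    refine ⟨fun u v => ?_, ⟨⟨0, hk⟩⟩⟩
    by_contra hr
    -- flip classes on the component of u
    set f' : Fin k → Fin 2 := fun j =>
      if G.Reachable u j then Equiv.swap (0 : Fin 2) 1 (f j) else f j with hf'def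
    have hreach_iff : ∀ x : Fin m, (G.Reachable u (j0 x) ↔ G.Reachable u (j1 x)) := by
      intro x
      constructor
      · exact fun h => h.trans (hadj01 x).reachable
      · exact fun h => h.trans (hadj01 x).symm.reachable
    have key : ∀ x : Fin m, ∃ s : Equiv.Perm (Fin 2),
        ∀ j : Fin k, x ∈ C j → f' j = s (f j) := by
      intro x
      by_cases hr0 : G.Reachable u (j0 x)
      · refine ⟨Equiv.swap 0 1, fun j hx => ?_⟩
        rcases memcases j x hx with rfl | rfl
        · simp [hf'def, hr0]
        · simp [hf'def, (hreach_iff x).mp hr0]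
      · refine ⟨Equiv.refl _, fun j hx => ?_⟩
        rcases memcases j x hx with rfl | rfl
        · simp [hf'def, hr0]
        · have hn1 : ¬G.Reachable u (j1 x) := fun h => hr0 ((hreach_iff x).mpr h)
          simp [hf'def, hn1]
    have hres' : IsResolution C f' := by
      intro i x
      obtain ⟨s, hs⟩ := key x
      obtain ⟨j, ⟨hj1', hj2'⟩, hju⟩ := hf (s.symm i) x
      refine ⟨j, ⟨by rw [hs j hj2', hj1', Equiv.apply_symm_apply], hj2'⟩, ?_⟩
      rintro y ⟨hy1, hy2⟩
      refine hju y ⟨?_, hy2⟩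
      rw [hs y hy2] at hy1
      exact (Equiv.eq_symm_apply s).mpr hy1
    obtain ⟨σ, hσ⟩ := huniq f' hres'
    have hu0 : f' u = σ (f u) := congrFun hσ u
    have hv0 : f' v = σ (f v) := congrFun hσ v
    have hu2 : σ (f u) = Equiv.swap 0 1 (f u) := by
      rw [← hu0]; simp only [hf'def]
      rw [if_pos (SimpleGraph.Reachable.refl u)]
    have h2 : σ (f v) = f v := by
      rw [← hv0]; simp [hf'def, hr]
    have h1 : σ (f u) ≠ f u := by
      rw [hu2]
      have : ∀ a : Fin 2, Equiv.swap (0:Fin 2) 1 a ≠ a := by decide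
      exact this (f u)
    rcases fin2 (f u) with hfu | hfu <;> rcases fin2 (f v) with hfv | hfv <;>
      rw [hfu] at h1 <;> rw [hfv] at h2
    · exact h1 h2
    · have : σ 0 = 0 ∨ σ 0 = 1 := fin2 _
      rcases this with h | h
      exacts [h1 h, absurd (σ.injective (h.trans h2.symm)) (by decide)]
    · have : σ 1 = 0 ∨ σ 1 = 1 := fin2 _
      rcases this with h | h
      exacts [absurd (σ.injective (h.trans h2.symm)) (by decide), h1 h]
    · exact h1 h2
  -- injection from non-root vertices into [m] via shortest paths
  set u : Fin k := ⟨0, hk⟩ with hudef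
  have step : ∀ v : Fin k, v ≠ u → ∃ w : Fin k, G.Adj v w ∧ G.dist u w < G.dist u v := by
    intro v hv
    obtain ⟨p, hp⟩ := (hconn u v).exists_walk_length_eq_dist
    have hlen : p.length ≠ 0 := by
      intro h0
      exact hv (p.eq_of_length_eq_zero h0).symm
    cases hq : p.reverse with
    | nil => exact absurd (by simpa using congrArg SimpleGraph.Walk.length hq) hlen
    | cons hadj q =>
      rename_i w
      refine ⟨w, hadj, ?_⟩
      have h1 : G.dist u w ≤ q.reverse.length := G.dist_le q.reverse
      have h2 : p.reverse.length = q.length + 1 := by rw [hq]; simp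
      rw [SimpleGraph.Walk.length_reverse] at h2
      rw [SimpleGraph.Walk.length_reverse] at h1
      omega
  choose w hw_adj hw_lt using step
  have pick : ∀ v : Fin k, ∀ hv : v ≠ u, ∃ x : Fin m, x ∈ C v ∧ x ∈ C (w v hv) :=
    fun v hv => (hw_adj v hv).2
  choose ψ hψ1 hψ2 using pick
  have hm' : 0 < m := (hne ⟨0, hk⟩).choose.pos
  -- inject univ.erase u into Fin m
  have hinj : ∀ v ∈ univ.erase u, ∀ v' ∈ univ.erase u,
      (fun v => if hv : v ≠ u then ψ v hv else ⟨0, hm'⟩) v =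
      (fun v => if hv : v ≠ u then ψ v hv else ⟨0, hm'⟩) v' → v = v' := by
    intro v hv v' hv' heq
    have hvne : v ≠ u := (Finset.mem_erase.mp hv).1
    have hv'ne : v' ≠ u := (Finset.mem_erase.mp hv').1
    dsimp only at heq
    rw [dif_pos hvne, dif_pos hv'ne] at heq
    set x := ψ v hvne with hxdef
    have hxv : x ∈ C v := hψ1 v hvne
    have hxw : x ∈ C (w v hvne) := hψ2 v hvne
    have hxv' : x ∈ C v' := heq ▸ hψ1 v' hv'ne
    have hxw' : x ∈ C (w v' hv'ne) := heq ▸ hψ2 v' hv'ne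
    by_contra hne'
    -- v, v' distinct, both in {j0 x, j1 x}; also w v, w v' in it
    have hvc := memcases v x hxv
    have hv'c := memcases v' x hxv'
    have hwc := memcases _ x hxw
    have hw'c := memcases _ x hxw'
    have hvwne : v ≠ w v hvne := (hw_adj v hvne).1
    have hv'wne : v' ≠ w v' hv'ne := (hw_adj v' hv'ne).1
    have hwv : w v hvne = v' := by
      rcases hvc with h1 | h1 <;> rcases hv'c with h3 | h3
      · exact absurd (h1.trans h3.symm) hne'
      · rcases hwc with h2 | h2
        · exact absurd (h2.trans h1.symm) (Ne.symm hvwne)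
        · exact h2.trans h3.symm
      · rcases hwc with h2 | h2
        · exact h2.trans h3.symm
        · exact absurd (h2.trans h1.symm) (Ne.symm hvwne)
      · exact absurd (h1.trans h3.symm) hne'
    have hwv' : w v' hv'ne = v := by
      rcases hv'c with h1 | h1 <;> rcases hvc with h3 | h3
      · exact absurd (h3.trans h1.symm) hne'
      · rcases hw'c with h2 | h2
        · exact absurd (h2.trans h1.symm) (Ne.symm hv'wne)
        · exact h2.trans h3.symm
      · rcases hw'c with h2 | h2
        · exact h2.trans h3.symm
        · exact absurd (h2.trans h1.symm) (Ne.symm hv'wne)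
      · exact absurd (h3.trans h1.symm) hne'
    have l1 := hw_lt v hvne
    have l2 := hw_lt v' hv'ne
    rw [hwv] at l1
    rw [hwv'] at l2
    omega
  have hcard := Finset.card_le_card_of_injOn _ (fun v _ => Finset.mem_univ _) hinj
  rw [Finset.card_erase_of_mem (Finset.mem_univ u)] at hcard
  simp only [Finset.card_univ, Fintype.card_fin] at hcard
  omega



lemma constr (m : ℕ) (hm : 0 < m) :
    ∃ C : Fin (m + 1) → Finset (Fin m), UniquelyResolvable 2 C := by
  classical
  have : Nonempty (Fin m) := ⟨⟨0, hm⟩⟩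
  set last : Fin (m + 1) := ⟨m, lt_add_one m⟩ with hlast
  have hlv : (last : ℕ) = m := rfl
  set C : Fin (m + 1) → Finset (Fin m) :=
    fun j => if h : (j : ℕ) < m then {⟨j, h⟩} else univ with hC
  set f : Fin (m + 1) → Fin 2 := fun j => if (j : ℕ) < m then 0 else 1 with hfdef
  have hCne : ∀ j, (C j).Nonempty := by
    intro j
    by_cases h : (j : ℕ) < m
    · simp [hC, h]
    · simp only [hC, dif_neg h]
      exact Finset.univ_nonempty
  have hflast : f last = 1 := by simp [hfdef, hlast]
  have hClast : C last = univ := by simp [hC, hlast]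
  have hres : IsResolution C f := by
    intro i x
    have fin2 : i = 0 ∨ i = 1 := by
      rcases i with ⟨iv, hi⟩
      interval_cases iv
      · exact Or.inl rfl
      · exact Or.inr rfl
    rcases fin2 with rfl | rfl
    · refine ⟨⟨(x : ℕ), by omega⟩, ⟨?_, ?_⟩, ?_⟩
      · simp [hfdef, x.isLt]
      · simp [hC, x.isLt]
      · rintro y ⟨hy1, hy2⟩
        have hylt : (y : ℕ) < m := by
          by_contra hy
          simp [hfdef, hy] at hy1
        rw [hC] at hy2
        simp only [dif_pos hylt, Finset.mem_singleton] at hy2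
        have : (x : ℕ) = (y : ℕ) := congrArg Fin.val hy2
        exact Fin.ext (by simpa using this.symm)
    · refine ⟨last, ⟨hflast, by rw [hClast]; exact Finset.mem_univ x⟩, ?_⟩
      rintro y ⟨hy1, hy2⟩
      have hy : ¬ (y : ℕ) < m := by
        by_contra hy
        simp [hfdef, hy] at hy1
      have : (y : ℕ) = m := by omega
      exact Fin.ext (by simpa [hlast] using this)
  refine ⟨C, hCne, f, hres, ?_⟩
  intro f' hf'
  set a : Fin 2 := f' last with ha
  have hnota : ∀ j : Fin (m + 1), (j : ℕ) < m → f' j ≠ a := by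
    intro j hj hja
    set x : Fin m := ⟨(j : ℕ), hj⟩ with hx
    obtain ⟨y, -, hy⟩ := hf' a x
    have h1 : j = y := hy j ⟨hja, by simp [hC, hj, hx]⟩
    have h2 : last = y := hy last ⟨rfl, by rw [hClast]; exact Finset.mem_univ x⟩
    have h3 : j = last := h1.trans h2.symm
    have h4 : (j : ℕ) = m := by rw [h3, hlv]
    omega
  refine ⟨Equiv.swap 1 a, funext fun j => ?_⟩
  by_cases hj : (j : ℕ) < m
  · have h1 : f' j ≠ a := hnota j hj
    have h2 : f j = 0 := by simp [hfdef, hj]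
    simp only [Function.comp_apply, h2]
    revert h1
    have : ∀ b c : Fin 2, b ≠ c → b = Equiv.swap 1 c 0 := by decide
    exact this (f' j) a
  · have hjl : j = last := Fin.ext (by omega)
    rw [hjl]
    simp only [Function.comp_apply, hflast]
    have : ∀ c : Fin 2, c = Equiv.swap 1 c 1 := by decide
    exact this a


/-- Any multiset of nonempty subsets of `[m]` uniquely resolvable into 2 classes has
size at most `m+1`; consequently `g 2 m = m + 1`. -/
theorem stmt1 (m : ℕ) (hm : 0 < m) :
    (∀ (k : ℕ) (C : Fin k → Finset (Fin m)), UniquelyResolvable 2 C → k ≤ m + 1) ∧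
    g 2 m = m + 1 := by
  refine ⟨fun k C h => ub m k C h, ?_⟩
  have hmem : m + 1 ∈ {k | ∃ C : Fin k → Finset (Fin m), UniquelyResolvable 2 C} :=
    constr m hm
  have hub : ∀ k ∈ {k | ∃ C : Fin k → Finset (Fin m), UniquelyResolvable 2 C}, k ≤ m + 1 := by
    rintro k ⟨C, hC⟩
    exact ub m k C hC
  unfold g
  exact le_antisymm (csSup_le ⟨m + 1, hmem⟩ hub) (le_csSup ⟨m + 1, hub⟩ hmem)
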